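/- arXiv:2002.10909 — 3 statements merged into one kernel-verified Lean document; each statement's English description precedes it below -/
import Mathlib

section
/- A submanifold M of a metallic Riemannian manifold (M̄, ḡ, J) is pointwise slant with Wirtinger function θ if and only if T² = (cos²θ)(pT + qI) on each tangent space, where T is the tangential part of J. -/
open scoped InnerProductSpace

/-- A submanifold is pointwise slant with Wirtinger function `θ`
iff `T² = cos²θ (pT + qI)` on each tangent space. Formalized pointwise: for a
subspace `W` of an inner product space and a self-adjoint `J` with
`J² = pJ + qI`, the condition `‖TX‖/‖JX‖ = cos θ` for all nonzero `X ∈ W`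
is equivalent to `T²X = cos²θ (pTX + qX)` for all `X ∈ W`. -/
theorem pointwise_slant_characterization
    (V : Type*) [NormedAddCommGroup V] [InnerProductSpace ℝ V] [FiniteDimensional ℝ V]
    (W : Submodule ℝ V) (J : V →ₗ[ℝ] V) (p q : ℝ) (hp : 0 < p) (hq : 0 < q)
    (hsym : ∀ X Y : V, ⟪J X, Y⟫_ℝ = ⟪X, J Y⟫_ℝ)
    (hJ2 : J ∘ₗ J = p • J + q • (LinearMap.id : V →ₗ[ℝ] V))
    (T : V → V) (hT : ∀ X, T X = (Submodule.orthogonalProjectionOnto W (J X) : V))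
    (θ : ℝ) (hθ : θ ∈ Set.Icc 0 (Real.pi/2)) :
    (∀ X ∈ W, X ≠ 0 → ‖T X‖ / ‖J X‖ = Real.cos θ) ↔
      (∀ X ∈ W, T (T X) = Real.cos θ ^ 2 • (p • T X + q • X)) := by
  set c := Real.cos θ with hc
  have hc0 : 0 ≤ c := Real.cos_nonneg_of_mem_Icc ⟨by linarith [hθ.1, Real.pi_pos], hθ.2⟩
  have hTmem : ∀ X, T X ∈ W := fun X => by rw [hT]; exact SetLike.coe_mem _
  have hproj : ∀ X : V, ∀ Y ∈ W, ⟪T X, Y⟫_ℝ = ⟪J X, Y⟫_ℝ := by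
    intro X Y hY
    rw [hT]
    have h0 := W.starProjection_inner_eq_zero (J X) Y hY
    rw [Submodule.starProjection_apply] at h0
    rw [inner_sub_left] at h0
    linarith
  have hTadd : ∀ X Y, T (X + Y) = T X + T Y := by
    intro X Y; simp [hT, map_add]
  have hJsq : ∀ X, J (J X) = p • J X + q • X := by
    intro X
    have := LinearMap.congr_fun hJ2 X
    simpa using this
  have hJne : ∀ X : V, X ≠ 0 → J X ≠ 0 := by
    intro X hX0 hJ0
    have h1 := hJsq X
    rw [hJ0, map_zero, smul_zero, zero_add] at h1
    have : q • X = 0 := h1.symm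
    rcases smul_eq_zero.mp this with h | h
    · exact hq.ne' h
    · exact hX0 h
  have hsa : ∀ X ∈ W, ∀ Y ∈ W, ⟪T X, Y⟫_ℝ = ⟪T Y, X⟫_ℝ := by
    intro X hX Y hY
    rw [hproj X Y hY, hsym, real_inner_comm, hproj Y X hX]
  have hJnorm : ∀ X ∈ W, ‖J X‖ ^ 2 = p * ⟪T X, X⟫_ℝ + q * ⟪X, X⟫_ℝ := by
    intro X hX
    have h1 : ⟪J X, J X⟫_ℝ = ⟪X, J (J X)⟫_ℝ := hsym X (J X)
    rw [hJsq, inner_add_right, real_inner_smul_right, real_inner_smul_right] at h1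
    have h2 : ⟪X, J X⟫_ℝ = ⟪T X, X⟫_ℝ := by
      rw [real_inner_comm, hproj X X hX]
    rw [← real_inner_self_eq_norm_sq, h1, h2]
  have hTT : ∀ X ∈ W, ⟪T (T X), X⟫_ℝ = ‖T X‖ ^ 2 := by
    intro X hX
    rw [hproj (T X) X hX, hsym, real_inner_comm, ← hproj X (T X) (hTmem X),
      real_inner_self_eq_norm_sq]
  have hTTY : ∀ X : V, ∀ Y ∈ W, ⟪T (T X), Y⟫_ℝ = ⟪T X, T Y⟫_ℝ := by
    intro X Y hY
    rw [hproj (T X) Y hY, hsym, real_inner_comm, ← hproj Y (T X) (hTmem X),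
      real_inner_comm]
  constructor
  · intro h X hX
    have hkey : ∀ Z ∈ W, ‖T Z‖ ^ 2 = c ^ 2 * ‖J Z‖ ^ 2 := by
      intro Z hZ
      rcases eq_or_ne Z 0 with rfl | hZ0
      · simp [hT]
      · have hJZ : ‖J Z‖ ≠ 0 := norm_ne_zero_iff.mpr (hJne Z hZ0)
        have h1 := h Z hZ hZ0
        rw [div_eq_iff hJZ] at h1
        rw [h1]; ring
    have hfXX : ∀ Z ∈ W, ⟪T (T Z), Z⟫_ℝ = c ^ 2 * (p * ⟪T Z, Z⟫_ℝ + q * ⟪Z, Z⟫_ℝ) := by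
      intro Z hZ
      rw [hTT Z hZ, hkey Z hZ, hJnorm Z hZ]
    -- show inner of the difference with every Y ∈ W vanishes
    have hzero : ∀ Y ∈ W,
        ⟪T (T X) - c ^ 2 • (p • T X + q • X), Y⟫_ℝ = 0 := by
      intro Y hY
      have hA := hfXX X hX
      have hB := hfXX Y hY
      have hC := hfXX (X + Y) (W.add_mem hX hY)
      simp only [hTadd, inner_add_left, inner_add_right] at hC
      -- symmetry facts
      have s1 : ⟪T (T Y), X⟫_ℝ = ⟪T (T X), Y⟫_ℝ := by
        rw [hTTY Y X hX, hTTY X Y hY, real_inner_comm]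
      have s2 : ⟪T Y, X⟫_ℝ = ⟪T X, Y⟫_ℝ := (hsa Y hY X hX).trans rfl
      have s3 : ⟪Y, X⟫_ℝ = ⟪X, Y⟫_ℝ := real_inner_comm X Y
      have hmain : ⟪T (T X), Y⟫_ℝ = c ^ 2 * (p * ⟪T X, Y⟫_ℝ + q * ⟪X, Y⟫_ℝ) := by
        rw [s1, s2, s3] at hC
        nlinarith [hC, hA, hB]
      rw [inner_sub_left, inner_smul_left, inner_add_left, inner_smul_left,
        inner_smul_left]
      simp only [RCLike.star_def, starRingEnd_apply, star_trivial]
      rw [hmain]; ring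
    have hmemZ : T (T X) - c ^ 2 • (p • T X + q • X) ∈ W := by
      exact W.sub_mem (hTmem _) (W.smul_mem _ (W.add_mem (W.smul_mem _ (hTmem X))
        (W.smul_mem _ hX)))
    have hz := hzero _ hmemZ
    rw [real_inner_self_eq_norm_sq] at hz
    have hz2 : T (T X) - c ^ 2 • (p • T X + q • X) = 0 :=
      norm_eq_zero.mp (sq_eq_zero_iff.mp hz)
    exact sub_eq_zero.mp hz2
  · intro h X hX hX0
    have hJX : ‖J X‖ ≠ 0 := norm_ne_zero_iff.mpr (hJne X hX0)
    have h1 := h X hX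
    have h2 : ⟪T (T X), X⟫_ℝ = c ^ 2 * (p * ⟪T X, X⟫_ℝ + q * ⟪X, X⟫_ℝ) := by
      rw [h1, real_inner_smul_left, inner_add_left, real_inner_smul_left,
        real_inner_smul_left]
    have h3 : ‖T X‖ ^ 2 = (c * ‖J X‖) ^ 2 := by
      rw [← hTT X hX, h2, ← hJnorm X hX]; ring
    have h4 : ‖T X‖ = c * ‖J X‖ := by
      have hn1 : (0:ℝ) ≤ ‖T X‖ := norm_nonneg _
      have hn2 : (0:ℝ) ≤ c * ‖J X‖ := mul_nonneg hc0 (norm_nonneg _)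
      nlinarith [h3]
    rw [h4, mul_div_assoc, div_self hJX, mul_one]
end

section
/- If M is a pointwise slant submanifold of a metallic Riemannian manifold with Wirtinger angle θ, i.e. T² = cos²θ (pT + qI) on the tangent space, then ḡ(NX, NY) = sin²θ [p·ḡ(TX, Y) + q·ḡ(X, Y)] for all tangent vectors X, Y. -/
open scoped InnerProductSpace

/-- If `M` is pointwise slant with Wirtinger angle `θ`
(`T² = cos²θ (pT + qI)`), then `ḡ(NX,NY) = sin²θ [p ḡ(TX,Y) + q ḡ(X,Y)]`. -/
theorem pointwise_slant_normal_inner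
    (V : Type*) [NormedAddCommGroup V] [InnerProductSpace ℝ V] [FiniteDimensional ℝ V]
    (W : Submodule ℝ V) (J : V →ₗ[ℝ] V) (p q : ℝ) (hp : 0 < p) (hq : 0 < q)
    (hsym : ∀ X Y : V, ⟪J X, Y⟫_ℝ = ⟪X, J Y⟫_ℝ)
    (hJ2 : J ∘ₗ J = p • J + q • (LinearMap.id : V →ₗ[ℝ] V))
    (T : V → V) (N : V → V)
    (hT : ∀ X, T X = (Submodule.orthogonalProjectionOnto W (J X) : V))
    (hN : ∀ X, N X = (Submodule.orthogonalProjectionOnto Wᗮ (J X) : V))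
    (θ : ℝ)
    (hslant : ∀ X ∈ W, T (T X) = Real.cos θ ^ 2 • (p • T X + q • X)) :
    ∀ X ∈ W, ∀ Y ∈ W,
      ⟪N X, N Y⟫_ℝ = Real.sin θ ^ 2 * (p * ⟪T X, Y⟫_ℝ + q * ⟪X, Y⟫_ℝ) := by
  intro X hX Y hY
  have hTmem : ∀ Z, T Z ∈ W := fun Z => by rw [hT]; exact (Submodule.orthogonalProjectionOnto W (J Z)).2
  have hNmem : ∀ Z, N Z ∈ Wᗮ := fun Z => by rw [hN]; exact (Submodule.orthogonalProjectionOnto Wᗮ (J Z)).2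
  have hdec : ∀ Z, J Z = T Z + N Z := fun Z => by
    rw [hT, hN, ← Submodule.starProjection_apply, ← Submodule.starProjection_apply,
      Submodule.starProjection_add_starProjection_orthogonal]
  have horthR : ∀ Z, ∀ B ∈ W, ⟪B, N Z⟫_ℝ = 0 := fun Z B hB => hNmem Z B hB
  have horthL : ∀ Z, ∀ B ∈ W, ⟪N Z, B⟫_ℝ = 0 := fun Z B hB => by
    rw [real_inner_comm]; exact horthR Z B hB
  -- T is symmetric on W
  have hTsymm : ∀ A ∈ W, ∀ B ∈ W, ⟪T A, B⟫_ℝ = ⟪A, T B⟫_ℝ := by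
    intro A hA B hB
    have h1 : ⟪T A, B⟫_ℝ = ⟪J A, B⟫_ℝ := by
      rw [hdec A, inner_add_left, horthL A B hB, add_zero]
    have h2 : ⟪A, T B⟫_ℝ = ⟪A, J B⟫_ℝ := by
      rw [hdec B, inner_add_right, horthR B A hA, add_zero]
    rw [h1, h2, hsym]
  -- ⟪JX, JY⟫ = p ⟪TX,Y⟫ + q ⟪X,Y⟫
  have hJJ : ⟪J X, J Y⟫_ℝ = p * ⟪T X, Y⟫_ℝ + q * ⟪X, Y⟫_ℝ := by
    have h0 : ⟪J X, J Y⟫_ℝ = ⟪(J ∘ₗ J) X, Y⟫_ℝ := by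
      simp only [LinearMap.comp_apply]
      exact (hsym (J X) Y).symm
    rw [h0, hJ2]
    simp only [LinearMap.add_apply, LinearMap.smul_apply, LinearMap.id_apply,
      inner_add_left, real_inner_smul_left]
    have hTX : ⟪T X, Y⟫_ℝ = ⟪J X, Y⟫_ℝ := by
      rw [hdec X, inner_add_left, horthL X Y hY, add_zero]
    rw [← hTX]
  -- ⟪TX, TY⟫ = cos²θ (p ⟪TX,Y⟫ + q ⟪X,Y⟫)
  have hTT : ⟪T X, T Y⟫_ℝ = Real.cos θ ^ 2 * (p * ⟪T X, Y⟫_ℝ + q * ⟪X, Y⟫_ℝ) := by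
    rw [hTsymm X hX (T Y) (hTmem Y), hslant Y hY, real_inner_smul_right,
      inner_add_right, real_inner_smul_right, real_inner_smul_right,
      ← hTsymm X hX Y hY]
  -- Expand ⟪JX, JY⟫ = ⟪TX,TY⟫ + ⟪NX,NY⟫
  have hsplit : ⟪J X, J Y⟫_ℝ = ⟪T X, T Y⟫_ℝ + ⟪N X, N Y⟫_ℝ := by
    rw [hdec X, hdec Y, inner_add_left, inner_add_right, inner_add_right,
      horthR Y (T X) (hTmem X), horthL X (T Y) (hTmem Y)]
    ring
  have hsin : Real.sin θ ^ 2 = 1 - Real.cos θ ^ 2 := by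
    have := Real.sin_sq_add_cos_sq θ; linarith
  have : ⟪N X, N Y⟫_ℝ = ⟪J X, J Y⟫_ℝ - ⟪T X, T Y⟫_ℝ := by linarith [hsplit]
  rw [this, hJJ, hTT, hsin]; ring
end

section
/- If M is a pointwise slant submanifold of a metallic Riemannian manifold with Wirtinger angle θ (so T² = cos²θ (pT + qI)), then tNX = sin²θ (pTX + qX) for every tangent vector X, where t is the tangential part of J on the normal bundle. -/
open scoped InnerProductSpace

/-- If `M` is pointwise slant with Wirtinger angle `θ`
(`T² = cos²θ (pT + qI)`), then `tNX = sin²θ (pTX + qX)` for every tangent `X`. -/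
theorem pointwise_slant_tN
    (V : Type*) [NormedAddCommGroup V] [InnerProductSpace ℝ V] [FiniteDimensional ℝ V]
    (W : Submodule ℝ V) (J : V →ₗ[ℝ] V) (p q : ℝ) (hp : 0 < p) (hq : 0 < q)
    (hsym : ∀ X Y : V, ⟪J X, Y⟫_ℝ = ⟪X, J Y⟫_ℝ)
    (hJ2 : J ∘ₗ J = p • J + q • (LinearMap.id : V →ₗ[ℝ] V))
    (T : V → V) (N : V → V) (t : V → V)
    (hT : ∀ X, T X = (Submodule.orthogonalProjection W (J X) : V))
    (hN : ∀ X, N X = (Submodule.orthogonalProjection Wᗮ (J X) : V))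
    (ht : ∀ U, t U = (Submodule.orthogonalProjection W (J U) : V))
    (θ : ℝ)
    (hslant : ∀ X ∈ W, T (T X) = Real.cos θ ^ 2 • (p • T X + q • X)) :
    ∀ X ∈ W, t (N X) = Real.sin θ ^ 2 • (p • T X + q • X) := by
  intro X hX
  have hdecomp : J X = T X + N X := by
    rw [hT, hN]
    exact (Submodule.starProjection_add_starProjection_orthogonal (K := W) (J X)).symm
  have hJJ : J (J X) = p • J X + q • X := by
    have := congrArg (fun f : V →ₗ[ℝ] V => f X) hJ2
    simpa using this
  -- project J(J X) onto W
  have hprojX : (Submodule.orthogonalProjection W X : V) = X :=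
    Submodule.starProjection_eq_self_iff.2 hX
  have key : (Submodule.orthogonalProjection W (J (J X)) : V) = p • T X + q • X := by
    rw [hJJ]
    simp [map_add, map_smul, ← hT X, hprojX]
  have key2 : (Submodule.orthogonalProjection W (J (J X)) : V) = T (T X) + t (N X) := by
    rw [hdecomp, map_add, map_add, Submodule.coe_add, ← hT (T X), ← ht (N X)]
  have : t (N X) = p • T X + q • X - T (T X) := by
    rw [key2] at key
    linear_combination (norm := module) key
  rw [this, hslant X hX]
  have hsin : Real.sin θ ^ 2 = 1 - Real.cos θ ^ 2 := by
    have := Real.sin_sq_add_cos_sq θ; linarith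
  rw [hsin]
  module
end
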